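/- Let a ≤ b be real numbers and let u : ℝ → ℝ be differentiable, nondecreasing (so u′ ≥ 0), and convex (so u′ is nondecreasing), with u(0) = 0. For a Borel probability measure μ supported on [a,b], define the optimized certainty equivalent C_u(μ) = sup_{λ ∈ [a,b]} ( λ + ∫_{[a,b]} u(x − λ) dμ(x) ). Then for all Borel probability measures μ, ν supported on [a,b] with CDFs F_μ, F_ν: C_u(μ) − C_u(ν) ≤ u′(b − a) · ∫_ℝ |F_μ(t) − F_ν(t)| dt. -/

import Mathlib

open MeasureTheory Set

/-- The optimized certainty equivalent (OCE) of a Borel probability measure `μ`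
supported on `[a, b]`, associated with utility function `u`:
`C_u(μ) = sup_{λ ∈ [a,b]} (λ + ∫_{[a,b]} u (x - λ) dμ(x))`. -/
noncomputable def OCE (u : ℝ → ℝ) (a b : ℝ) (μ : Measure ℝ) : ℝ :=
  ⨆ lam : Set.Icc a b, ((lam : ℝ) + ∫ x in Set.Icc a b, u (x - (lam : ℝ)) ∂μ)

section Aux

lemma aux_compl_null (a b : ℝ) (μ : Measure ℝ) [IsProbabilityMeasure μ]
    (hμ : μ (Set.Icc a b) = 1) : μ (Set.Icc a b)ᶜ = 0 := by
  rw [measure_compl measurableSet_Icc (measure_ne_top μ _), hμ, measure_univ, tsub_self]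

lemma aux_cdf_lt (a b : ℝ) (μ : Measure ℝ) [IsProbabilityMeasure μ]
    (hμ : μ (Set.Icc a b) = 1) {t : ℝ} (ht : t < a) : (μ (Set.Iic t)).toReal = 0 := by
  have hsub : Set.Iic t ⊆ (Set.Icc a b)ᶜ := fun x hx hx' =>
    absurd (le_trans hx'.1 hx) (not_le.2 ht)
  rw [measure_mono_null hsub (aux_compl_null a b μ hμ)]
  simp

lemma aux_cdf_ge (a b : ℝ) (μ : Measure ℝ) [IsProbabilityMeasure μ]
    (hμ : μ (Set.Icc a b) = 1) {t : ℝ} (ht : b ≤ t) : (μ (Set.Iic t)).toReal = 1 := by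
  have h1 : μ (Set.Iic t) = 1 := by
    refine le_antisymm prob_le_one ?_
    rw [← hμ]
    exact measure_mono (fun x hx => le_trans hx.2 ht)
  rw [h1, ENNReal.toReal_one]

lemma aux_Ioi_toReal (μ : Measure ℝ) [IsProbabilityMeasure μ] (t : ℝ) :
    (μ (Set.Ioi t)).toReal = 1 - (μ (Set.Iic t)).toReal := by
  have h : μ (Set.Ioi t) = 1 - μ (Set.Iic t) := by
    rw [← Set.compl_Iic, measure_compl measurableSet_Iic (measure_ne_top μ _), measure_univ]
  rw [h, ENNReal.toReal_sub_of_le prob_le_one ENNReal.one_ne_top, ENNReal.toReal_one]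

lemma aux_cdf_mono (μ : Measure ℝ) [IsProbabilityMeasure μ] :
    Monotone (fun t => (μ (Set.Iic t)).toReal) := fun s t hst =>
  ENNReal.toReal_mono (measure_ne_top _ _) (measure_mono (Set.Iic_subset_Iic.2 hst))

lemma aux_cdf_nonneg (μ : Measure ℝ) (t : ℝ) : 0 ≤ (μ (Set.Iic t)).toReal :=
  ENNReal.toReal_nonneg

lemma aux_cdf_le_one (μ : Measure ℝ) [IsProbabilityMeasure μ] (t : ℝ) :
    (μ (Set.Iic t)).toReal ≤ 1 := by
  simpa using ENNReal.toReal_mono ENNReal.one_ne_top (prob_le_one (μ := μ) (s := Set.Iic t))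

/-- Representation of `∫ g dμ` via the survival function, with integrability. -/
lemma aux_repr (a b : ℝ) (hab : a ≤ b) (g : ℝ → ℝ) (hg : Differentiable ℝ g)
    (hdm : Monotone (deriv g)) (hd0 : ∀ t, 0 ≤ deriv g t)
    (μ : Measure ℝ) [IsProbabilityMeasure μ] (hμ : μ (Set.Icc a b) = 1) :
    Integrable ((Set.Ici a).indicator (fun t => deriv g t * (μ (Set.Ioi t)).toReal)) volume ∧
    ∫ x in Set.Icc a b, g x ∂μ =
      g a + ∫ t, (Set.Ici a).indicator (fun t => deriv g t * (μ (Set.Ioi t)).toReal) t := by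
  set h : ℝ → ℝ := deriv g with hh
  have hmeas : Measurable h := hdm.measurable
  set ρ : Measure ℝ := μ.restrict (Set.Icc a b) with hρ
  set f : ℝ → ℝ → ℝ := fun x t => (Set.Ico a x).indicator h t with hf
  have hcompl : μ (Set.Icc a b)ᶜ = 0 := aux_compl_null a b μ hμ
  -- measurability of uncurried f
  have hS : MeasurableSet {p : ℝ × ℝ | a ≤ p.2 ∧ p.2 < p.1} :=
    (measurableSet_le measurable_const measurable_snd).inter
      (measurableSet_lt measurable_snd measurable_fst)
  have hfeq : Function.uncurry f =
      Set.indicator {p : ℝ × ℝ | a ≤ p.2 ∧ p.2 < p.1} (fun p => h p.2) := by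
    funext p
    simp only [Function.uncurry, hf, Set.indicator_apply, Set.mem_Ico, Set.mem_setOf_eq]
  have hfmeas : Measurable (Function.uncurry f) := by
    rw [hfeq]; exact (hmeas.comp measurable_snd).indicator hS
  -- integrability of uncurried f on the product
  have hae1 : ∀ᵐ p ∂(ρ.prod (volume : Measure ℝ)), p.1 ∈ Set.Icc a b := by
    rw [ae_iff]
    have hset : {p : ℝ × ℝ | ¬ p.1 ∈ Set.Icc a b} = (Set.Icc a b)ᶜ ×ˢ (Set.univ : Set ℝ) := by
      ext p; simp [Set.mem_prod]
    rw [hset, Measure.prod_prod, hρ, Measure.restrict_apply (measurableSet_Icc.compl)]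
    simp
  have hbound_int : Integrable
      ((Set.Icc a b ×ˢ Set.Icc a b).indicator (fun _ => h b)) (ρ.prod volume) := by
    rw [integrable_indicator_iff (measurableSet_Icc.prod measurableSet_Icc)]
    refine integrableOn_const ?_
    rw [Measure.prod_prod]
    exact (ENNReal.mul_lt_top (measure_lt_top _ _) (by simp)).ne
  have hint : Integrable (Function.uncurry f) (ρ.prod volume) := by
    refine Integrable.mono' hbound_int hfmeas.aestronglyMeasurable ?_
    filter_upwards [hae1] with p hp
    by_cases hpm : p.2 ∈ Set.Ico a p.1
    · have h1 : Function.uncurry f p = h p.2 := by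
        simp only [Function.uncurry, hf, Set.indicator_of_mem hpm]
      have h2 : p ∈ Set.Icc a b ×ˢ Set.Icc a b :=
        ⟨hp, ⟨hpm.1, le_trans hpm.2.le hp.2⟩⟩
      rw [h1, Set.indicator_of_mem h2, Real.norm_eq_abs, abs_of_nonneg (hd0 _)]
      exact hdm (le_trans hpm.2.le hp.2)
    · have h1 : Function.uncurry f p = 0 := by
        simp only [Function.uncurry, hf, Set.indicator_of_notMem hpm]
      rw [h1, norm_zero]
      exact Set.indicator_nonneg (fun _ _ => hd0 b) p
  -- inner integral on the left
  have hinner : ∀ x ∈ Set.Icc a b, ∫ t, f x t = g x - g a := by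
    intro x hx
    have h1 : ∫ t, f x t = ∫ t in Set.Ico a x, h t := by
      rw [hf]; exact integral_indicator measurableSet_Ico
    rw [h1, integral_Ico_eq_integral_Ioo, ← integral_Ioc_eq_integral_Ioo,
      ← intervalIntegral.integral_of_le hx.1,
      intervalIntegral.integral_deriv_eq_sub (fun t _ => hg t) hdm.intervalIntegrable]
  -- inner integral on the right
  have hr : ∀ t, (∫ x, f x t ∂ρ) =
      (Set.Ici a).indicator (fun t => h t * (μ (Set.Ioi t)).toReal) t := by
    intro t
    by_cases hta : a ≤ t
    · have h1 : (fun x => f x t) = (Set.Ioi t).indicator (fun _ => h t) := by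
        funext x
        show (Set.Ico a x).indicator h t = (Set.Ioi t).indicator (fun _ => h t) x
        by_cases hxt : t < x
        · have hm1 : t ∈ Set.Ico a x := ⟨hta, hxt⟩
          have hm2 : x ∈ Set.Ioi t := hxt
          rw [Set.indicator_of_mem hm1, Set.indicator_of_mem hm2]
        · have hm3 : x ∉ Set.Ioi t := hxt
          rw [Set.indicator_of_notMem (fun hm => hxt (Set.mem_Ico.1 hm).2),
            Set.indicator_of_notMem hm3]
      have hmem : t ∈ Set.Ici a := hta
      rw [h1, integral_indicator measurableSet_Ioi, setIntegral_const,
        Set.indicator_of_mem hmem]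
      have h2 : ρ (Set.Ioi t) = μ (Set.Ioi t) := by
        rw [hρ, Measure.restrict_apply measurableSet_Ioi, measure_inter_conull hcompl]
      rw [measureReal_def, h2, smul_eq_mul, mul_comm]
    · have h1 : (fun x => f x t) = fun _ => (0 : ℝ) := by
        funext x
        show (Set.Ico a x).indicator h t = 0
        exact Set.indicator_of_notMem (fun hm => hta (Set.mem_Ico.1 hm).1) _
      have hm4 : t ∉ Set.Ici a := hta
      rw [h1, integral_zero, Set.indicator_of_notMem hm4]
  -- integrability of the indicator function
  have hind_int : Integrable
      ((Set.Ici a).indicator (fun t => h t * (μ (Set.Ioi t)).toReal)) volume := by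
    have := hint.integral_prod_right
    refine this.congr (Filter.Eventually.of_forall (fun t => ?_))
    exact hr t
  refine ⟨hind_int, ?_⟩
  -- Fubini
  have hswap := integral_integral_swap hint
  -- evaluate LHS of hswap
  have hL : (∫ x, (∫ t, f x t) ∂ρ) = ∫ x in Set.Icc a b, g x ∂μ - g a := by
    have h1 : (∫ x, (∫ t, f x t) ∂ρ) = ∫ x in Set.Icc a b, (g x - g a) ∂μ := by
      rw [hρ]
      exact setIntegral_congr_fun measurableSet_Icc (fun x hx => hinner x hx)
    have hgint : IntegrableOn g (Set.Icc a b) μ :=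
      (hg.continuous.continuousOn).integrableOn_compact isCompact_Icc
    rw [h1, integral_sub hgint (integrable_const _), setIntegral_const, measureReal_def, hμ]
    simp
  -- evaluate RHS of hswap
  have hR : (∫ t, (∫ x, f x t ∂ρ)) =
      ∫ t, (Set.Ici a).indicator (fun t => h t * (μ (Set.Ioi t)).toReal) t := by
    congr 1
    funext t
    exact hr t
  rw [hL, hR] at hswap
  linarith [hswap]

/-- Key difference bound. -/
lemma aux_key (a b : ℝ) (hab : a ≤ b) (g : ℝ → ℝ) (hg : Differentiable ℝ g)
    (hdm : Monotone (deriv g)) (hd0 : ∀ t, 0 ≤ deriv g t)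
    (L : ℝ) (hL : ∀ t ∈ Set.Icc a b, deriv g t ≤ L)
    (μ ν : Measure ℝ) [IsProbabilityMeasure μ] [IsProbabilityMeasure ν]
    (hμ : μ (Set.Icc a b) = 1) (hν : ν (Set.Icc a b) = 1) :
    ∫ x in Set.Icc a b, g x ∂μ - ∫ x in Set.Icc a b, g x ∂ν ≤
      L * ∫ t, |(μ (Set.Iic t)).toReal - (ν (Set.Iic t)).toReal| := by
  obtain ⟨hiμ, heμ⟩ := aux_repr a b hab g hg hdm hd0 μ hμ
  obtain ⟨hiν, heν⟩ := aux_repr a b hab g hg hdm hd0 ν hν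
  have hL0 : 0 ≤ L := le_trans (hd0 a) (hL a ⟨le_refl a, hab⟩)
  set Fμ : ℝ → ℝ := fun t => (μ (Set.Iic t)).toReal with hFμ
  set Fν : ℝ → ℝ := fun t => (ν (Set.Iic t)).toReal with hFν
  -- integrability of the absolute difference of CDFs
  have habs : Integrable (fun t => |Fμ t - Fν t|) volume := by
    refine Integrable.mono' (g := (Set.Icc a b).indicator (fun _ => (1 : ℝ)))
      ((integrable_indicator_iff measurableSet_Icc).2
        (integrableOn_const (by simp)))
      (((aux_cdf_mono μ).measurable.sub (aux_cdf_mono ν).measurable).abs.aestronglyMeasurable)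
      (Filter.Eventually.of_forall (fun t => ?_))
    rw [Real.norm_eq_abs, abs_abs]
    by_cases h1 : t < a
    · rw [hFμ, hFν]
      simp only [aux_cdf_lt a b μ hμ h1, aux_cdf_lt a b ν hν h1, sub_self, abs_zero]
      exact Set.indicator_nonneg (fun _ _ => zero_le_one) t
    · push_neg at h1
      by_cases h2 : t ≤ b
      · have hmem : t ∈ Set.Icc a b := ⟨h1, h2⟩
        rw [Set.indicator_of_mem hmem]
        rw [abs_sub_le_iff]
        constructor
        · have := aux_cdf_le_one μ t
          have := aux_cdf_nonneg ν t
          simp only [hFμ, hFν]; linarith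
        · have := aux_cdf_le_one ν t
          have := aux_cdf_nonneg μ t
          simp only [hFμ, hFν]; linarith
      · push_neg at h2
        rw [hFμ, hFν]
        simp only [aux_cdf_ge a b μ hμ h2.le, aux_cdf_ge a b ν hν h2.le, sub_self, abs_zero]
        exact Set.indicator_nonneg (fun _ _ => zero_le_one) t
  rw [heμ, heν]
  have hsub : g a + (∫ t, (Set.Ici a).indicator (fun t => deriv g t * (μ (Set.Ioi t)).toReal) t)
      - (g a + ∫ t, (Set.Ici a).indicator (fun t => deriv g t * (ν (Set.Ioi t)).toReal) t)
      = ∫ t, ((Set.Ici a).indicator (fun t => deriv g t * (μ (Set.Ioi t)).toReal) t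
          - (Set.Ici a).indicator (fun t => deriv g t * (ν (Set.Ioi t)).toReal) t) := by
    rw [integral_sub hiμ hiν]; ring
  rw [hsub]
  have hmono : ∀ t, (Set.Ici a).indicator (fun t => deriv g t * (μ (Set.Ioi t)).toReal) t
      - (Set.Ici a).indicator (fun t => deriv g t * (ν (Set.Ioi t)).toReal) t
      ≤ L * |Fμ t - Fν t| := by
    intro t
    by_cases hta : a ≤ t
    · have hmem : t ∈ Set.Ici a := hta
      rw [Set.indicator_of_mem hmem, Set.indicator_of_mem hmem]
      rw [aux_Ioi_toReal μ t, aux_Ioi_toReal ν t]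
      have hdiff : deriv g t * (1 - (μ (Set.Iic t)).toReal)
          - deriv g t * (1 - (ν (Set.Iic t)).toReal) = deriv g t * (Fν t - Fμ t) := by
        rw [hFμ, hFν]; ring
      rw [hdiff]
      by_cases htb : t ≤ b
      · calc deriv g t * (Fν t - Fμ t) ≤ deriv g t * |Fν t - Fμ t| :=
              mul_le_mul_of_nonneg_left (le_abs_self _) (hd0 t)
          _ ≤ L * |Fν t - Fμ t| :=
              mul_le_mul_of_nonneg_right (hL t ⟨hta, htb⟩) (abs_nonneg _)
          _ = L * |Fμ t - Fν t| := by rw [abs_sub_comm]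
      · push_neg at htb
        have e1 : Fμ t = 1 := aux_cdf_ge a b μ hμ htb.le
        have e2 : Fν t = 1 := aux_cdf_ge a b ν hν htb.le
        rw [e1, e2, sub_self, mul_zero, abs_zero, mul_zero]
    · have hm4 : t ∉ Set.Ici a := hta
      rw [Set.indicator_of_notMem hm4, Set.indicator_of_notMem hm4, sub_self]
      exact mul_nonneg hL0 (abs_nonneg _)
  calc ∫ t, ((Set.Ici a).indicator (fun t => deriv g t * (μ (Set.Ioi t)).toReal) t
        - (Set.Ici a).indicator (fun t => deriv g t * (ν (Set.Ioi t)).toReal) t)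
      ≤ ∫ t, L * |Fμ t - Fν t| :=
        integral_mono (hiμ.sub hiν) (habs.const_mul L) hmono
    _ = L * ∫ t, |Fμ t - Fν t| := integral_const_mul L _

end Aux

/-- Lipschitz continuity of the OCE with a differentiable, nondecreasing, convex
utility with respect to the ℓ1 distance of CDFs, with Lipschitz constant `u' (b - a)`. -/
theorem oce_convex_lipschitz_l1
    (a b : ℝ) (hab : a ≤ b) (u : ℝ → ℝ) (hu_diff : Differentiable ℝ u)
    (hu_mono : Monotone u) (hu_conv : ConvexOn ℝ Set.univ u) (hu0 : u 0 = 0)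
    (μ ν : Measure ℝ) [IsProbabilityMeasure μ] [IsProbabilityMeasure ν]
    (hμ : μ (Set.Icc a b) = 1) (hν : ν (Set.Icc a b) = 1) :
    OCE u a b μ - OCE u a b ν ≤
      deriv u (b - a) *
        ∫ t : ℝ, |(μ (Set.Iic t)).toReal - (ν (Set.Iic t)).toReal| := by
  haveI : Nonempty (Set.Icc a b) := (Set.nonempty_Icc.2 hab).to_subtype
  -- derivative of u is nonnegative
  have hd0 : ∀ t, 0 ≤ deriv u t := by
    intro t
    have h1 : 0 ≤ slope u (t - 1) t := by
      rw [slope_def_field]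
      apply div_nonneg
      · exact sub_nonneg.2 (hu_mono (by linarith))
      · linarith
    exact h1.trans (hu_conv.slope_le_deriv (Set.mem_univ _) (Set.mem_univ _)
      (by linarith) (hu_diff t))
  -- derivative of u is monotone
  have hdm : Monotone (deriv u) :=
    monotoneOn_univ.1 (hu_conv.monotoneOn_deriv (fun x _ => hu_diff x))
  set C : ℝ := deriv u (b - a) *
    ∫ t : ℝ, |(μ (Set.Iic t)).toReal - (ν (Set.Iic t)).toReal| with hC
  rw [sub_le_iff_le_add]
  -- bddAbove for ν's family
  have hbdd : BddAbove (Set.range fun lam : Set.Icc a b =>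
      ((lam : ℝ) + ∫ x in Set.Icc a b, u (x - (lam : ℝ)) ∂ν)) := by
    refine ⟨b + u (b - a), ?_⟩
    rintro y ⟨lam, rfl⟩
    show (lam : ℝ) + ∫ x in Set.Icc a b, u (x - (lam : ℝ)) ∂ν ≤ b + u (b - a)
    have hcont : Continuous fun x => u (x - (lam : ℝ)) :=
      hu_diff.continuous.comp (continuous_id.sub continuous_const)
    have hint : IntegrableOn (fun x => u (x - (lam : ℝ))) (Set.Icc a b) ν :=
      hcont.continuousOn.integrableOn_compact isCompact_Icc
    have h1 : ∫ x in Set.Icc a b, u (x - (lam : ℝ)) ∂ν ≤ u (b - a) := by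
      have h2 : ∫ x in Set.Icc a b, u (x - (lam : ℝ)) ∂ν
          ≤ ∫ _ in Set.Icc a b, u (b - a) ∂ν :=
        setIntegral_mono_on hint (integrableOn_const (measure_lt_top _ _).ne)
          measurableSet_Icc
          (fun x hx => hu_mono (by have h3 := lam.2.1; have h4 := hx.2; linarith))
      rw [setIntegral_const, measureReal_def, hν, ENNReal.toReal_one, one_smul] at h2
      exact h2
    have h2 : (lam : ℝ) ≤ b := lam.2.2
    linarith
  show OCE u a b μ ≤ C + OCE u a b ν
  rw [OCE]
  refine ciSup_le (fun lam => ?_)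
  set g : ℝ → ℝ := fun x => u (x - (lam : ℝ)) with hg
  have hgd : Differentiable ℝ g := hu_diff.comp (differentiable_id.sub_const _)
  have hgderiv : ∀ t, deriv g t = deriv u (t - (lam : ℝ)) := fun t =>
    deriv_comp_sub_const u (lam : ℝ) t
  have hgdm : Monotone (deriv g) := by
    intro s t hst
    rw [hgderiv, hgderiv]
    exact hdm (by linarith)
  have hgd0 : ∀ t, 0 ≤ deriv g t := fun t => by rw [hgderiv]; exact hd0 _
  have hgL : ∀ t ∈ Set.Icc a b, deriv g t ≤ deriv u (b - a) := by
    intro t ht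
    rw [hgderiv]
    exact hdm (by have := lam.2.1; have := ht.2; linarith)
  have hkey := aux_key a b hab g hgd hgdm hgd0 (deriv u (b - a)) hgL μ ν hμ hν
  have h1 : ((lam : ℝ) + ∫ x in Set.Icc a b, u (x - (lam : ℝ)) ∂ν) ≤ OCE u a b ν :=
    le_ciSup hbdd lam
  have h2 : (∫ x in Set.Icc a b, g x ∂μ) - (∫ x in Set.Icc a b, g x ∂ν) ≤ C := hkey
  have h3 : (∫ x in Set.Icc a b, g x ∂ν) = ∫ x in Set.Icc a b, u (x - (lam : ℝ)) ∂ν := rfl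
  have h4 : (∫ x in Set.Icc a b, g x ∂μ) = ∫ x in Set.Icc a b, u (x - (lam : ℝ)) ∂μ := rfl
  rw [h3, h4] at h2
  linarith
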